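/- Let 0 < t < 1. Then EXP-(1,t)-WT holds if and only if lim_{j→∞} (log γ_j⁻¹)/log j = ∞ and lim_{j→∞} (log λ_j⁻¹)/log j = ∞, i.e., for every M > 0 one has γ_j < j^{−M} for all sufficiently large j, and for every M > 0 one has λ_j < j^{−M} for all sufficiently large j. -/

import Mathlib

open Filter Real Set Topology
open scoped ENNReal NNReal

noncomputable section

/-- The weighted eigenvalues `λ_{k,j}`: `1` if `j = 1`, and `γ_k · λ_j` if `j ≥ 2`. -/
def lamKJ (γ lam : ℕ → ℝ) (k j : ℕ) : ℝ := if j = 1 then 1 else γ k * lam j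

/-- The information complexity `n(ε,d)`: the extended-natural cardinality of the set of
`d`-tuples of positive integers `(n_1,…,n_d)` with `λ_{1,n_1} ⋯ λ_{d,n_d} > ε²`. -/
def infoN (γ lam : ℕ → ℝ) (ε : ℝ) (d : ℕ) : ℕ∞ :=
  {n : Fin d → ℕ | (∀ i, 1 ≤ n i) ∧ ε ^ 2 < ∏ i, lamKJ γ lam (i.1 + 1) (n i)}.encard

/-- EXP-SPT with a given exponent `p`: there is `C ≥ 0` with
`n(ε,d) ≤ C (1 + log ε⁻¹)^p` for all `d ≥ 1` and `ε ∈ (0,1]`. -/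
def ExpSPTwith (γ lam : ℕ → ℝ) (p : ℝ) : Prop :=
  ∃ C : ℝ, 0 ≤ C ∧ ∀ d : ℕ, 1 ≤ d → ∀ ε : ℝ, 0 < ε → ε ≤ 1 →
    (infoN γ lam ε d : ℝ≥0∞) ≤ ENNReal.ofReal (C * (1 + Real.log ε⁻¹) ^ p)

/-- Exponential strong polynomial tractability. -/
def ExpSPT (γ lam : ℕ → ℝ) : Prop := ∃ p : ℝ, 0 ≤ p ∧ ExpSPTwith γ lam p

/-- Exponential polynomial tractability: there are `C, q, p ≥ 0` with
`n(ε,d) ≤ C d^q (1 + log ε⁻¹)^p` for all `d ≥ 1` and `ε ∈ (0,1]`. -/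
def ExpPT (γ lam : ℕ → ℝ) : Prop :=
  ∃ C q p : ℝ, 0 ≤ C ∧ 0 ≤ q ∧ 0 ≤ p ∧ ∀ d : ℕ, 1 ≤ d → ∀ ε : ℝ, 0 < ε → ε ≤ 1 →
    (infoN γ lam ε d : ℝ≥0∞) ≤ ENNReal.ofReal (C * (d : ℝ) ^ q * (1 + Real.log ε⁻¹) ^ p)

/-- EXP-QPT with a given exponent `t`. -/
def ExpQPTwith (γ lam : ℕ → ℝ) (t : ℝ) : Prop :=
  ∃ C : ℝ, 0 ≤ C ∧ ∀ d : ℕ, 1 ≤ d → ∀ ε : ℝ, 0 < ε → ε ≤ 1 →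
    (infoN γ lam ε d : ℝ≥0∞) ≤
      ENNReal.ofReal (C * Real.exp (t * (1 + Real.log d) * (1 + Real.log (1 + Real.log ε⁻¹))))

/-- Exponential quasi-polynomial tractability. -/
def ExpQPT (γ lam : ℕ → ℝ) : Prop := ∃ t : ℝ, 0 ≤ t ∧ ExpQPTwith γ lam t

/-- Exponential `(s,t)`-weak tractability:
`log max(1, n(ε,d)) / (d^t + (1 + log ε⁻¹)^s) → 0` as `d + ε⁻¹ → ∞`
(in particular `n(ε,d)` is finite for all such `d, ε`). -/
def ExpSTWT (γ lam : ℕ → ℝ) (s t : ℝ) : Prop :=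
  ∀ δ : ℝ, 0 < δ → ∃ T : ℝ, ∀ d : ℕ, 1 ≤ d → ∀ ε : ℝ, 0 < ε → ε ≤ 1 →
    T ≤ (d : ℝ) + ε⁻¹ →
    ∃ N : ℕ, infoN γ lam ε d = (N : ℕ∞) ∧
      Real.log (max 1 (N : ℝ)) / ((d : ℝ) ^ t + (1 + Real.log ε⁻¹) ^ s) < δ

/-- `j(ε) = max { j ≥ 1 : λ_j > ε² }` (a well-defined maximum when `λ_j → 0`). -/
def jEps (lam : ℕ → ℝ) (ε : ℝ) : ℕ := sSup {j : ℕ | 1 ≤ j ∧ ε ^ 2 < lam j}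

/-- `d(ε) = max { d ≥ 1 : γ_d > ε² }`, with `d(ε) = 0` if `γ_1 ≤ ε²`
(a well-defined maximum when `γ_d → 0`). -/
def dEps (γ : ℕ → ℝ) (ε : ℝ) : ℕ := sSup {d : ℕ | 1 ≤ d ∧ ε ^ 2 < γ d}

private lemma sumBound (f : ℕ → ℝ) (hf0 : ∀ j, 0 ≤ f j) (hf1 : ∀ j, f j ≤ 1) (m : ℕ)
    (h : ∀ j, m ≤ j → f j ≤ ((j : ℝ) ^ 2)⁻¹) :
    ∃ B : ℝ, 0 ≤ B ∧ ∀ s : Finset ℕ, ∑ j ∈ s, f j ≤ B := by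
  have hsum : Summable (fun j : ℕ => ((j : ℝ) ^ 2)⁻¹) := by
    simpa [one_div] using Real.summable_one_div_nat_pow.mpr one_lt_two
  have htsum0 : (0:ℝ) ≤ ∑' j : ℕ, ((j : ℝ) ^ 2)⁻¹ :=
    tsum_nonneg (fun j => by positivity)
  refine ⟨m + ∑' j : ℕ, ((j : ℝ) ^ 2)⁻¹, by positivity, fun s => ?_⟩
  rw [← Finset.sum_filter_add_sum_filter_not s (fun j => j < m)]
  have h1 : ∑ j ∈ s.filter (fun j => j < m), f j ≤ (m : ℝ) := by
    calc ∑ j ∈ s.filter (fun j => j < m), f j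
        ≤ ∑ _j ∈ s.filter (fun j => j < m), (1:ℝ) :=
          Finset.sum_le_sum (fun i _ => hf1 i)
      _ = ((s.filter (fun j => j < m)).card : ℝ) := by simp
      _ ≤ (m : ℝ) := by
          have : s.filter (fun j => j < m) ⊆ Finset.range m := by
            intro j hj
            simp only [Finset.mem_filter] at hj
            exact Finset.mem_range.mpr hj.2
          exact_mod_cast (Finset.card_le_card this).trans_eq (Finset.card_range m)
  have h2 : ∑ j ∈ s.filter (fun j => ¬ j < m), f j ≤ ∑' j : ℕ, ((j : ℝ) ^ 2)⁻¹ := by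
    calc ∑ j ∈ s.filter (fun j => ¬ j < m), f j
        ≤ ∑ j ∈ s.filter (fun j => ¬ j < m), ((j : ℝ) ^ 2)⁻¹ :=
          Finset.sum_le_sum (fun j hj => by
            simp only [Finset.mem_filter, not_lt] at hj
            exact h j hj.2)
      _ ≤ ∑' j : ℕ, ((j : ℝ) ^ 2)⁻¹ :=
          Summable.sum_le_tsum _ (fun j _ => by positivity) hsum
  linarith

section basic

variable {γ lam : ℕ → ℝ}

private lemma lamKJ_nonneg (hγ_pos : ∀ j, 1 ≤ j → 0 < γ j)
    (hlam_nonneg : ∀ j, 1 ≤ j → 0 ≤ lam j) {k j : ℕ} (hk : 1 ≤ k) (hj : 1 ≤ j) :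
    0 ≤ lamKJ γ lam k j := by
  unfold lamKJ
  split
  · exact zero_le_one
  · exact mul_nonneg (hγ_pos k hk).le (hlam_nonneg j hj)

private lemma lam_le_one (hlam_anti : AntitoneOn lam (Set.Ici 1)) (hlam1 : lam 1 = 1)
    {j : ℕ} (hj : 1 ≤ j) : lam j ≤ 1 :=
  hlam1 ▸ hlam_anti (Set.mem_Ici.mpr le_rfl) (Set.mem_Ici.mpr hj) hj

private lemma lamKJ_le_one (hlam_anti : AntitoneOn lam (Set.Ici 1)) (hlam1 : lam 1 = 1)
    (hlam_nonneg : ∀ j, 1 ≤ j → 0 ≤ lam j)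
    (hγ_le : ∀ j, 1 ≤ j → γ j ≤ 1) {k j : ℕ} (hk : 1 ≤ k) (hj : 1 ≤ j) :
    lamKJ γ lam k j ≤ 1 := by
  unfold lamKJ
  split
  · exact le_rfl
  · exact mul_le_one₀ (hγ_le k hk) (hlam_nonneg j hj) (lam_le_one hlam_anti hlam1 hj)

end basic

private lemma count_upper (γ lam : ℕ → ℝ)
    (hlam_anti : AntitoneOn lam (Set.Ici 1)) (hlam1 : lam 1 = 1)
    (hlam_nonneg : ∀ j, 1 ≤ j → 0 ≤ lam j)
    (hγ_pos : ∀ j, 1 ≤ j → 0 < γ j) (hγ_le : ∀ j, 1 ≤ j → γ j ≤ 1)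
    (τ : ℝ) (hτ : 0 < τ) (Bl Bg : ℝ) (hBl0 : 0 ≤ Bl)
    (hBl : ∀ s : Finset ℕ, ∑ j ∈ s, (if 2 ≤ j then lam j ^ τ else 0) ≤ Bl)
    (hBg : ∀ s : Finset ℕ, ∑ k ∈ s, (if 1 ≤ k then γ k ^ τ else 0) ≤ Bg)
    (ε : ℝ) (hε0 : 0 < ε) (d : ℕ)
    (Jm : ℕ) (hJm1 : 1 ≤ Jm) (hJm : ∀ j, Jm ≤ j → lam j ≤ ε ^ 2) :
    ∃ N : ℕ, infoN γ lam ε d = (N : ℕ∞) ∧ (N : ℝ) * (ε ^ 2) ^ τ ≤ Real.exp (Bl * Bg) := by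
  classical
  set A := {n : Fin d → ℕ | (∀ i, 1 ≤ n i) ∧ ε ^ 2 < ∏ i, lamKJ γ lam (i.1 + 1) (n i)} with hA
  set box : Finset (Fin d → ℕ) := Fintype.piFinset (fun _ => Finset.Icc 1 Jm) with hbox
  have hnn : ∀ (n : Fin d → ℕ), (∀ i, 1 ≤ n i) → ∀ i : Fin d, 0 ≤ lamKJ γ lam (i.1 + 1) (n i) :=
    fun n hn i => lamKJ_nonneg hγ_pos hlam_nonneg (Nat.le_add_left 1 i.1) (hn i)
  have hle1 : ∀ (n : Fin d → ℕ), (∀ i, 1 ≤ n i) → ∀ i : Fin d, lamKJ γ lam (i.1 + 1) (n i) ≤ 1 :=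
    fun n hn i => lamKJ_le_one hlam_anti hlam1 hlam_nonneg hγ_le (Nat.le_add_left 1 i.1) (hn i)
  -- A ⊆ box
  have hsub : A ⊆ ↑box := by
    rintro n ⟨hn1, hnp⟩
    have hfac : ∀ i : Fin d, ε ^ 2 < lamKJ γ lam (i.1 + 1) (n i) := by
      intro i
      have hsplit : ∏ j, lamKJ γ lam (j.1 + 1) (n j)
          = lamKJ γ lam (i.1 + 1) (n i) * ∏ j ∈ Finset.univ.erase i, lamKJ γ lam (j.1 + 1) (n j) :=
        (Finset.mul_prod_erase _ _ (Finset.mem_univ i)).symm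
      have hrest : ∏ j ∈ Finset.univ.erase i, lamKJ γ lam (j.1 + 1) (n j) ≤ 1 :=
        Finset.prod_le_one (fun j _ => hnn n hn1 j) (fun j _ => hle1 n hn1 j)
      have := hnp.trans_le (le_of_eq hsplit)
      calc ε ^ 2 < lamKJ γ lam (i.1 + 1) (n i) * ∏ j ∈ Finset.univ.erase i, lamKJ γ lam (j.1 + 1) (n j) := this
        _ ≤ lamKJ γ lam (i.1 + 1) (n i) * 1 := by
            apply mul_le_mul_of_nonneg_left hrest (hnn n hn1 i)
        _ = lamKJ γ lam (i.1 + 1) (n i) := mul_one _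
    simp only [hbox, Finset.mem_coe, Fintype.mem_piFinset, Finset.mem_Icc]
    intro i
    refine ⟨hn1 i, ?_⟩
    by_contra hgt
    push_neg at hgt
    have h2 : 2 ≤ n i := by
      rcases Nat.lt_or_ge (n i) 2 with h | h
      · interval_cases h' : n i <;> omega
      · exact h
    have hne : n i ≠ 1 := by omega
    have : lamKJ γ lam (i.1 + 1) (n i) = γ (i.1 + 1) * lam (n i) := by
      unfold lamKJ; rw [if_neg hne]
    have hlt : lamKJ γ lam (i.1 + 1) (n i) ≤ lam (n i) := by
      rw [this]
      exact mul_le_of_le_one_left (hlam_nonneg _ (hn1 i)) (hγ_le _ (Nat.le_add_left 1 i.1))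
    have : lam (n i) ≤ ε ^ 2 := hJm _ (by omega)
    exact absurd ((hfac i).trans_le (hlt.trans this)) (lt_irrefl _)
  have hfin : A.Finite := Set.Finite.subset box.finite_toSet hsub
  refine ⟨hfin.toFinset.card, ?_, ?_⟩
  · rw [infoN, ← hA, hfin.encard_eq_coe_toFinset_card]
  -- counting bound
  set g : (Fin d → ℕ) → ℝ := fun n => ∏ i, lamKJ γ lam (i.1 + 1) (n i) ^ τ with hg
  have hglow : ∀ n ∈ hfin.toFinset, (ε ^ 2) ^ τ ≤ g n := by
    intro n hn
    rw [Set.Finite.mem_toFinset] at hn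
    obtain ⟨hn1, hnp⟩ := hn
    have : (ε ^ 2) ^ τ ≤ (∏ i, lamKJ γ lam (i.1 + 1) (n i)) ^ τ :=
      Real.rpow_le_rpow (by positivity) hnp.le hτ.le
    rwa [← Real.finset_prod_rpow _ _ (fun i _ => hnn n hn1 i)] at this
  have step1 : (hfin.toFinset.card : ℝ) * (ε ^ 2) ^ τ ≤ ∑ n ∈ hfin.toFinset, g n := by
    have := Finset.card_nsmul_le_sum hfin.toFinset g ((ε ^ 2) ^ τ) hglow
    simpa [nsmul_eq_mul] using this
  have step2 : ∑ n ∈ hfin.toFinset, g n ≤ ∑ n ∈ box, g n := by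
    apply Finset.sum_le_sum_of_subset_of_nonneg
    · rw [Set.Finite.toFinset_subset]
      exact hsub
    · intro n hn _
      apply Finset.prod_nonneg
      intro i _
      have hn1 : 1 ≤ n i := by
        rw [hbox] at hn
        simp only [Fintype.mem_piFinset, Finset.mem_Icc] at hn
        exact (hn i).1
      exact Real.rpow_nonneg (lamKJ_nonneg hγ_pos hlam_nonneg (Nat.le_add_left 1 i.1) hn1) _
  have step3 : ∑ n ∈ box, g n = ∏ i : Fin d, ∑ j ∈ Finset.Icc 1 Jm, lamKJ γ lam (i.1 + 1) j ^ τ := by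
    rw [hbox]
    simp only [hg]
    exact (Finset.prod_univ_sum (fun _ : Fin d => Finset.Icc 1 Jm)
      (fun i j => lamKJ γ lam (i.1 + 1) j ^ τ)).symm
  have step4 : ∀ i : Fin d, ∑ j ∈ Finset.Icc 1 Jm, lamKJ γ lam (i.1 + 1) j ^ τ
      ≤ Real.exp (γ (i.1 + 1) ^ τ * Bl) := by
    intro i
    rw [Finset.Icc_eq_cons_Ioc hJm1, Finset.sum_cons]
    have h1 : lamKJ γ lam (i.1 + 1) 1 ^ τ = 1 := by
      unfold lamKJ; rw [if_pos rfl, Real.one_rpow]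
    have h2 : ∑ j ∈ Finset.Ioc 1 Jm, lamKJ γ lam (i.1 + 1) j ^ τ
        = γ (i.1 + 1) ^ τ * ∑ j ∈ Finset.Ioc 1 Jm, lam j ^ τ := by
      rw [Finset.mul_sum]
      apply Finset.sum_congr rfl
      intro j hj
      rw [Finset.mem_Ioc] at hj
      have hne : j ≠ 1 := by omega
      unfold lamKJ
      rw [if_neg hne, Real.mul_rpow (hγ_pos _ (Nat.le_add_left 1 i.1)).le (hlam_nonneg j (by omega))]
    have h3 : ∑ j ∈ Finset.Ioc 1 Jm, lam j ^ τ ≤ Bl := by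
      have := hBl (Finset.Ioc 1 Jm)
      rw [Finset.sum_ite_of_true] at this
      · exact this
      · intro j hj; rw [Finset.mem_Ioc] at hj; omega
    have hγτ : (0:ℝ) ≤ γ (i.1 + 1) ^ τ := Real.rpow_nonneg (hγ_pos _ (Nat.le_add_left 1 i.1)).le _
    calc lamKJ γ lam (i.1 + 1) 1 ^ τ + ∑ j ∈ Finset.Ioc 1 Jm, lamKJ γ lam (i.1 + 1) j ^ τ
        = 1 + γ (i.1 + 1) ^ τ * ∑ j ∈ Finset.Ioc 1 Jm, lam j ^ τ := by rw [h1, h2]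
      _ ≤ 1 + γ (i.1 + 1) ^ τ * Bl := by
          have := mul_le_mul_of_nonneg_left h3 hγτ
          linarith
      _ ≤ Real.exp (γ (i.1 + 1) ^ τ * Bl) := by
          have := Real.add_one_le_exp (γ (i.1 + 1) ^ τ * Bl)
          linarith
  have step5 : ∏ i : Fin d, ∑ j ∈ Finset.Icc 1 Jm, lamKJ γ lam (i.1 + 1) j ^ τ
      ≤ Real.exp (Bl * Bg) := by
    calc ∏ i : Fin d, ∑ j ∈ Finset.Icc 1 Jm, lamKJ γ lam (i.1 + 1) j ^ τ
        ≤ ∏ i : Fin d, Real.exp (γ (i.1 + 1) ^ τ * Bl) := by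
          apply Finset.prod_le_prod
          · intro i _
            apply Finset.sum_nonneg
            intro j hj
            rw [Finset.mem_Icc] at hj
            exact Real.rpow_nonneg (lamKJ_nonneg hγ_pos hlam_nonneg (Nat.le_add_left 1 i.1) hj.1) _
          · exact fun i _ => step4 i
      _ = Real.exp (∑ i : Fin d, γ (i.1 + 1) ^ τ * Bl) := (Real.exp_sum _ _).symm
      _ ≤ Real.exp (Bl * Bg) := by
          apply Real.exp_le_exp.mpr
          have hsum : ∑ i : Fin d, γ (i.1 + 1) ^ τ * Bl = (∑ i : Fin d, γ (i.1 + 1) ^ τ) * Bl :=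
            (Finset.sum_mul _ _ _).symm
          rw [hsum]
          have h6 : ∑ i : Fin d, γ (i.1 + 1) ^ τ ≤ Bg := by
            have h7 : ∑ i : Fin d, γ (i.1 + 1) ^ τ = ∑ k ∈ Finset.range d, γ (k + 1) ^ τ :=
              Fin.sum_univ_eq_sum_range (fun k => γ (k + 1) ^ τ) d
            have h8 : ∑ k ∈ Finset.range d, γ (k + 1) ^ τ
                = ∑ k ∈ Finset.image (fun k => k + 1) (Finset.range d), (if 1 ≤ k then γ k ^ τ else 0) := by
              rw [Finset.sum_image (fun a _ b _ h => by omega)]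
              apply Finset.sum_congr rfl
              intro k _
              rw [if_pos (Nat.le_add_left 1 k)]
            rw [h7, h8]
            exact hBg _
          calc (∑ i : Fin d, γ (i.1 + 1) ^ τ) * Bl ≤ Bg * Bl := by
                apply mul_le_mul_of_nonneg_right h6 hBl0
            _ = Bl * Bg := mul_comm _ _
  calc (hfin.toFinset.card : ℝ) * (ε ^ 2) ^ τ ≤ ∑ n ∈ hfin.toFinset, g n := step1
    _ ≤ ∑ n ∈ box, g n := step2
    _ = ∏ i : Fin d, ∑ j ∈ Finset.Icc 1 Jm, lamKJ γ lam (i.1 + 1) j ^ τ := step3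
    _ ≤ Real.exp (Bl * Bg) := step5

private lemma rpow_inv_sq_bound {x : ℝ} (hx0 : 0 ≤ x) (τ : ℝ) (hτ : 0 < τ) {j : ℕ}
    (hj : x < (j : ℝ) ^ (-(2 / τ))) (hxj : 1 ≤ j) : x ^ τ ≤ ((j : ℝ) ^ 2)⁻¹ := by
  have hjpos : (0:ℝ) < (j : ℝ) := by exact_mod_cast hxj
  have h1 : x ^ τ ≤ ((j : ℝ) ^ (-(2 / τ))) ^ τ := Real.rpow_le_rpow hx0 hj.le hτ.le
  have h2 : ((j : ℝ) ^ (-(2 / τ))) ^ τ = (j : ℝ) ^ (-(2:ℝ)) := by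
    rw [← Real.rpow_mul hjpos.le]
    congr 1
    field_simp
  have h3 : (j : ℝ) ^ (-(2:ℝ)) = ((j : ℝ) ^ 2)⁻¹ := by
    rw [show (-(2:ℝ)) = -((2:ℕ) : ℝ) by norm_num, Real.rpow_neg hjpos.le, Real.rpow_natCast]
  rw [h2, h3] at h1
  exact h1

private lemma suffDir (γ lam : ℕ → ℝ)
    (hlam_anti : AntitoneOn lam (Set.Ici 1)) (hlam1 : lam 1 = 1)
    (hlam_nonneg : ∀ j, 1 ≤ j → 0 ≤ lam j)
    (hγ_anti : AntitoneOn γ (Set.Ici 1))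
    (hγ_pos : ∀ j, 1 ≤ j → 0 < γ j) (hγ_le : ∀ j, 1 ≤ j → γ j ≤ 1)
    (t : ℝ) (ht0 : 0 < t)
    (hγd : ∀ M : ℝ, 0 < M → ∀ᶠ j : ℕ in atTop, γ j < (j : ℝ) ^ (-M))
    (hld : ∀ M : ℝ, 0 < M → ∀ᶠ j : ℕ in atTop, lam j < (j : ℝ) ^ (-M)) :
    ExpSTWT γ lam 1 t := by
  intro δ hδ
  set τ : ℝ := δ / 4 with hτdef
  have hτ : 0 < τ := by positivity
  -- bound Bl for lam
  obtain ⟨m1, hm1⟩ := Filter.eventually_atTop.mp (hld (2 / τ) (by positivity))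
  have hBl' := sumBound (fun j => if 2 ≤ j then lam j ^ τ else 0)
    (fun j => by split
                 · exact Real.rpow_nonneg (hlam_nonneg j (by omega)) _
                 · exact le_rfl)
    (fun j => by split
                 · exact Real.rpow_le_one (hlam_nonneg j (by omega))
                     (lam_le_one hlam_anti hlam1 (by omega)) hτ.le
                 · exact zero_le_one)
    (max m1 1)
    (fun j hj => by
      split
      · exact rpow_inv_sq_bound (hlam_nonneg j (by omega)) τ hτ
          (hm1 j (le_trans (le_max_left _ _) hj)) (by omega)
      · positivity)
  obtain ⟨Bl, hBl0, hBl⟩ := hBl'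
  -- bound Bg for γ
  obtain ⟨m2, hm2⟩ := Filter.eventually_atTop.mp (hγd (2 / τ) (by positivity))
  have hBg' := sumBound (fun j => if 1 ≤ j then γ j ^ τ else 0)
    (fun j => by split
                 · exact Real.rpow_nonneg (hγ_pos j (by omega)).le _
                 · exact le_rfl)
    (fun j => by split
                 · exact Real.rpow_le_one (hγ_pos j (by omega)).le (hγ_le j (by omega)) hτ.le
                 · exact zero_le_one)
    (max m2 1)
    (fun j hj => by
      split
      · exact rpow_inv_sq_bound (hγ_pos j (by omega)).le τ hτ
          (hm2 j (le_trans (le_max_left _ _) hj)) (by omega)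
      · positivity)
  obtain ⟨Bg, hBg0, hBg⟩ := hBg'
  set R : ℝ := 2 * (Bl * Bg) / δ with hRdef
  have hR0 : 0 ≤ R := by positivity
  refine ⟨2 * max ((R + 1) ^ t⁻¹) (Real.exp R), ?_⟩
  intro d hd ε hε0 hε1 hT
  -- Jm for this ε
  obtain ⟨m3, hm3⟩ := Filter.eventually_atTop.mp (hld 1 one_pos)
  set Jm : ℕ := max (max m3 1) (⌈(ε ^ 2)⁻¹⌉₊ + 1) with hJmdef
  have hJm1 : 1 ≤ Jm := le_trans (le_max_right m3 1) (le_max_left _ _)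
  have hJm : ∀ j, Jm ≤ j → lam j ≤ ε ^ 2 := by
    intro j hj
    have hj3 : m3 ≤ j := le_trans (le_trans (le_max_left m3 1) (le_max_left _ _)) hj
    have hj2 : (⌈(ε ^ 2)⁻¹⌉₊ + 1 : ℕ) ≤ j := le_trans (le_max_right _ _) hj
    have h1 : lam j < (j : ℝ) ^ (-(1:ℝ)) := hm3 j hj3
    have hjR : (ε ^ 2)⁻¹ < (j : ℝ) := by
      have := Nat.le_ceil ((ε ^ 2)⁻¹)
      have h2 : ((⌈(ε ^ 2)⁻¹⌉₊ + 1 : ℕ) : ℝ) ≤ (j : ℝ) := by exact_mod_cast hj2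
      push_cast at h2
      linarith
    have hε2 : (0:ℝ) < (ε ^ 2)⁻¹ := by positivity
    have h3 : (j : ℝ) ^ (-(1:ℝ)) = ((j : ℝ))⁻¹ := Real.rpow_neg_one _
    have h4 : ((j : ℝ))⁻¹ < ε ^ 2 := by
      rw [show (ε ^ 2 : ℝ) = ((ε ^ 2)⁻¹)⁻¹ by rw [inv_inv]]
      exact inv_strictAnti₀ hε2 hjR
    rw [h3] at h1
    linarith
  obtain ⟨N, hN, hNb⟩ := count_upper γ lam hlam_anti hlam1 hlam_nonneg hγ_pos hγ_le
    τ hτ Bl Bg hBl0 hBl hBg ε hε0 d Jm hJm1 hJm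
  refine ⟨N, hN, ?_⟩
  set L : ℝ := Real.log ε⁻¹ with hLdef
  have hLε : L = -Real.log ε := Real.log_inv ε
  have hL0 : 0 ≤ L := by
    rw [hLε]
    linarith [Real.log_nonpos hε0.le hε1]
  -- log bound
  have hpow_pos : (0:ℝ) < (ε ^ 2) ^ τ := Real.rpow_pos_of_pos (by positivity) _
  have hpow_le1 : (ε ^ 2) ^ τ ≤ 1 := Real.rpow_le_one (by positivity) (by nlinarith) hτ.le
  have hNle : (N : ℝ) ≤ Real.exp (Bl * Bg) / (ε ^ 2) ^ τ := (le_div_iff₀ hpow_pos).mpr hNb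
  have hRHS1 : (1:ℝ) ≤ Real.exp (Bl * Bg) / (ε ^ 2) ^ τ := by
    rw [le_div_iff₀ hpow_pos, one_mul]
    exact le_trans hpow_le1 (Real.one_le_exp (by positivity))
  have hlog : Real.log (max 1 (N : ℝ)) ≤ Bl * Bg + 2 * τ * L := by
    have h5 : max 1 (N : ℝ) ≤ Real.exp (Bl * Bg) / (ε ^ 2) ^ τ := max_le hRHS1 hNle
    have h6 : Real.log (max 1 (N : ℝ)) ≤ Real.log (Real.exp (Bl * Bg) / (ε ^ 2) ^ τ) :=
      Real.log_le_log (by positivity) h5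
    have h7 : Real.log (Real.exp (Bl * Bg) / (ε ^ 2) ^ τ)
        = Bl * Bg - τ * (2 * Real.log ε) := by
      rw [Real.log_div (Real.exp_ne_zero _) (ne_of_gt hpow_pos), Real.log_exp,
        Real.log_rpow (by positivity), Real.log_pow]
      norm_num
    rw [h7] at h6
    rw [hLε] at *
    linarith
  -- denominator
  have hrw : ((d : ℝ) ^ t + (1 + Real.log ε⁻¹) ^ (1:ℝ)) = (d : ℝ) ^ t + (1 + L) := by
    rw [Real.rpow_one]
  have hd1 : (1:ℝ) ≤ (d : ℝ) := by exact_mod_cast hd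
  have hdt1 : (1:ℝ) ≤ (d : ℝ) ^ t := by
    calc (1:ℝ) = 1 ^ t := (Real.one_rpow t).symm
      _ ≤ (d : ℝ) ^ t := Real.rpow_le_rpow zero_le_one hd1 ht0.le
  set D : ℝ := (d : ℝ) ^ t + (1 + L) with hDdef
  have hD2 : (1:ℝ) + L ≤ D := by
    simp only [hDdef]; linarith
  have hDR : R + 1 ≤ D := by
    rcases le_or_gt (2 * max ((R + 1) ^ t⁻¹) (Real.exp R) / 2) (d : ℝ) with hcase | hcase
    · have h8 : (R + 1) ^ t⁻¹ ≤ (d : ℝ) := by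
        calc (R + 1) ^ t⁻¹ ≤ max ((R + 1) ^ t⁻¹) (Real.exp R) := le_max_left _ _
          _ = 2 * max ((R + 1) ^ t⁻¹) (Real.exp R) / 2 := by ring
          _ ≤ (d : ℝ) := hcase
      have h9 : R + 1 ≤ (d : ℝ) ^ t := by
        have h10 : ((R + 1) ^ t⁻¹) ^ t ≤ (d : ℝ) ^ t :=
          Real.rpow_le_rpow (Real.rpow_nonneg (by linarith) _) h8 ht0.le
        rwa [← Real.rpow_mul (by linarith), inv_mul_cancel₀ (ne_of_gt ht0), Real.rpow_one] at h10
      simp only [hDdef]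
      linarith
    · have h8 : Real.exp R ≤ ε⁻¹ := by
        have hsum : 2 * max ((R + 1) ^ t⁻¹) (Real.exp R) ≤ (d : ℝ) + ε⁻¹ := hT
        have : Real.exp R ≤ max ((R + 1) ^ t⁻¹) (Real.exp R) := le_max_right _ _
        linarith
      have h9 : R ≤ L := by
        calc R = Real.log (Real.exp R) := (Real.log_exp R).symm
          _ ≤ Real.log ε⁻¹ := Real.log_le_log (Real.exp_pos R) h8
      simp only [hDdef]
      linarith
  have hDpos : (0:ℝ) < D := by simp only [hDdef]; linarith
  rw [hrw, div_lt_iff₀ hDpos]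
  have key : Bl * Bg + 2 * τ * L < δ * D := by
    have f3 : Bl * Bg = δ * R / 2 := by
      rw [hRdef]; field_simp
    have p1 : δ / 2 * (R + 1) ≤ δ / 2 * D := mul_le_mul_of_nonneg_left hDR (by positivity)
    have p2 : δ / 2 * (1 + L) ≤ δ / 2 * D := mul_le_mul_of_nonneg_left hD2 (by positivity)
    have hτL : 2 * τ * L = δ * L / 2 := by rw [hτdef]; ring
    nlinarith
  exact lt_of_le_of_lt hlog key

private lemma necLam (γ lam : ℕ → ℝ)
    (hlam_anti : AntitoneOn lam (Set.Ici 1)) (hlam1 : lam 1 = 1)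
    (hlam_nonneg : ∀ j, 1 ≤ j → 0 ≤ lam j)
    (hγ_pos : ∀ j, 1 ≤ j → 0 < γ j) (hγ_le : ∀ j, 1 ≤ j → γ j ≤ 1)
    (t : ℝ) (hwt : ExpSTWT γ lam 1 t) :
    ∀ M : ℝ, 0 < M → ∀ᶠ j : ℕ in atTop, lam j < (j : ℝ) ^ (-M) := by
  classical
  intro M hM
  by_contra hc
  rw [Filter.not_eventually] at hc
  have hfreq : ∀ a : ℕ, ∃ j, a ≤ j ∧ (j : ℝ) ^ (-M) ≤ lam j := by
    intro a
    obtain ⟨j, hj1, hj2⟩ := Filter.frequently_atTop.mp hc a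
    exact ⟨j, hj1, not_lt.mp hj2⟩
  have hγ1pos : 0 < γ 1 := hγ_pos 1 le_rfl
  have hγ1le : γ 1 ≤ 1 := hγ_le 1 le_rfl
  by_cases hinf : ∀ c : ℝ, 0 < c → ∃ j, 1 ≤ j ∧ lam j < c
  · -- λ → 0 case : counting argument with d = 1
    obtain ⟨T, hTprop⟩ := hwt (1 / (2 * M)) (by positivity)
    set T2 : ℝ := max T 2 with hT2def
    have hT2pos : (0:ℝ) < T2 := lt_of_lt_of_le two_pos (le_max_right _ _)
    obtain ⟨j₀, hj₀1, hj₀⟩ := hinf ((T2 ^ 2)⁻¹) (by positivity)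
    set c₀ : ℝ := 2 + (Real.log 2 + Real.log (γ 1)⁻¹) / 2 with hc₀def
    have hlogγ : 0 ≤ Real.log (γ 1)⁻¹ := by
      rw [Real.log_inv]
      linarith [Real.log_nonpos hγ1pos.le hγ1le]
    have hc₀pos : 0 < c₀ := by
      have := Real.log_pos one_lt_two
      simp only [hc₀def]; linarith
    clear_value c₀
    set j₁ : ℕ := ⌈Real.exp (2 * c₀ / M)⌉₊ + 1 with hj₁def
    obtain ⟨j, hjge, hMj⟩ := hfreq (max (max j₀ j₁) 3)
    have hj3 : 3 ≤ j := le_trans (le_max_right _ _) hjge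
    have hjj₀ : j₀ ≤ j := le_trans (le_trans (le_max_left _ _) (le_max_left _ _)) hjge
    have hjj₁ : j₁ ≤ j := le_trans (le_trans (le_max_right _ _) (le_max_left _ _)) hjge
    have hj1 : 1 ≤ j := by omega
    have hjpos : (0:ℝ) < (j : ℝ) := by
      have : (0:ℕ) < j := by omega
      exact_mod_cast this
    have hljpos : 0 < lam j := lt_of_lt_of_le (Real.rpow_pos_of_pos hjpos _) hMj
    have hlj1 : lam j ≤ 1 := lam_le_one hlam_anti hlam1 hj1
    set x : ℝ := γ 1 * lam j / 2 with hxdef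
    have hxpos : 0 < x := by positivity
    have hxle : x ≤ 1 / 2 := by
      have : γ 1 * lam j ≤ 1 := mul_le_one₀ hγ1le hljpos.le hlj1
      simp only [hxdef]; linarith
    set ε : ℝ := Real.sqrt x with hεdef
    have hε0 : 0 < ε := Real.sqrt_pos.mpr hxpos
    have hε2 : ε ^ 2 = x := Real.sq_sqrt hxpos.le
    have hε1 : ε ≤ 1 := by
      rw [hεdef, show (1:ℝ) = Real.sqrt 1 by rw [Real.sqrt_one]]
      exact Real.sqrt_le_sqrt (by linarith)
    -- T ≤ 1 + ε⁻¹
    have hljsmall : lam j < (T2 ^ 2)⁻¹ := lt_of_le_of_lt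
      (hlam_anti (Set.mem_Ici.mpr hj₀1) (Set.mem_Ici.mpr hj1) hjj₀) hj₀
    have hε2small : ε ^ 2 < (T2⁻¹) ^ 2 := by
      rw [hε2, hxdef, inv_pow]
      have h1 : γ 1 * lam j ≤ lam j := mul_le_of_le_one_left hljpos.le hγ1le
      linarith
    have hεT2 : ε < T2⁻¹ := lt_of_pow_lt_pow_left₀ 2 (by positivity) hε2small
    have hT2ε : T2 < ε⁻¹ := by
      rw [show T2 = (T2⁻¹)⁻¹ by rw [inv_inv]]
      exact inv_strictAnti₀ hε0 hεT2
    have hTle : T ≤ ((1:ℕ) : ℝ) + ε⁻¹ := by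
      push_cast
      have : T ≤ T2 := le_max_left _ _
      linarith
    obtain ⟨N, hN, hratio⟩ := hTprop 1 le_rfl ε hε0 hε1 hTle
    -- N ≥ j via the tuples (m) for m = 1..j
    set A : Set (Fin 1 → ℕ) :=
      {n : Fin 1 → ℕ | (∀ i, 1 ≤ n i) ∧ ε ^ 2 < ∏ i, lamKJ γ lam (i.1 + 1) (n i)} with hA
    have hAenc : A.encard = (N : ℕ∞) := hN
    have hAfin : A.Finite := by
      rw [← Set.encard_ne_top_iff, hAenc]
      simp
    set f : ℕ → (Fin 1 → ℕ) := fun m => fun _ => m with hfdef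
    have hfinj : Function.Injective f := by
      intro a b hab
      exact congrFun hab 0
    have himg : f '' ↑(Finset.Icc 1 j) ⊆ A := by
      rintro _ ⟨m, hm, rfl⟩
      rw [Finset.coe_Icc, Set.mem_Icc] at hm
      constructor
      · intro i; exact hm.1
      · rw [Fin.prod_univ_one]
        show ε ^ 2 < lamKJ γ lam (0 + 1) m
        unfold lamKJ
        split
        · rw [hε2]; linarith
        · have hm2 : 2 ≤ m := by omega
          have : lam j ≤ lam m := hlam_anti (Set.mem_Ici.mpr hm.1) (Set.mem_Ici.mpr hj1) hm.2
          have hgl : γ 1 * lam j ≤ γ 1 * lam m := mul_le_mul_of_nonneg_left this hγ1pos.le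
          rw [hε2, hxdef]
          have : 0 < γ 1 * lam j := by positivity
          linarith
    have hjN : j ≤ N := by
      have h1 : (f '' ↑(Finset.Icc 1 j)).ncard = j := by
        rw [Set.ncard_image_of_injective _ hfinj, Set.ncard_coe_finset, Nat.card_Icc]
        omega
      have h2 : A.ncard = N := by
        rw [Set.ncard_def, hAenc]
        rfl
      have h3 := Set.ncard_le_ncard himg hAfin
      omega
    -- ratio lower bound
    have hlogj : 1 < Real.log j := by
      rw [Real.lt_log_iff_exp_lt hjpos]
      calc Real.exp 1 < 2.7182818286 := Real.exp_one_lt_d9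
        _ ≤ (j : ℝ) := by
          have : (3:ℝ) ≤ (j:ℝ) := by exact_mod_cast hj3
          linarith
    have hlogjpos : 0 < Real.log j := by linarith
    -- L = log ε⁻¹
    set L : ℝ := Real.log ε⁻¹ with hLdef
    have hL : L = (Real.log 2 + Real.log (γ 1)⁻¹ + Real.log (lam j)⁻¹) / 2 := by
      rw [hLdef, Real.log_inv, hεdef, Real.log_sqrt hxpos.le, hxdef]
      rw [Real.log_div (by positivity) (by norm_num), Real.log_mul (ne_of_gt hγ1pos) (ne_of_gt hljpos)]
      rw [Real.log_inv, Real.log_inv]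
      ring
    have hloglam : Real.log (lam j)⁻¹ ≤ M * Real.log j := by
      have h1 : lam j ≥ (j:ℝ) ^ (-M) := hMj
      have h2 : (j:ℝ) ^ (-M) = ((j:ℝ) ^ M)⁻¹ := Real.rpow_neg hjpos.le M
      have h3 : (lam j)⁻¹ ≤ (j:ℝ) ^ M := by
        rw [h2] at h1
        have hpM : (0:ℝ) < (j:ℝ) ^ M := Real.rpow_pos_of_pos hjpos M
        rw [show ((j:ℝ) ^ M) = (((j:ℝ) ^ M)⁻¹)⁻¹ by rw [inv_inv]]
        exact inv_anti₀ (by positivity) h1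
      calc Real.log (lam j)⁻¹ ≤ Real.log ((j:ℝ) ^ M) := Real.log_le_log (by positivity) h3
        _ = M * Real.log j := Real.log_rpow hjpos M
    have hc₀logj : c₀ ≤ M / 2 * Real.log j := by
      have h1 : Real.exp (2 * c₀ / M) ≤ (j:ℝ) := by
        have h2 : (j₁ : ℝ) ≤ (j : ℝ) := by exact_mod_cast hjj₁
        have h3 := Nat.le_ceil (Real.exp (2 * c₀ / M))
        rw [hj₁def] at h2
        push_cast at h2
        linarith
      have h4 : 2 * c₀ / M ≤ Real.log j := by
        rw [show Real.log (j:ℝ) = Real.log (j:ℝ) from rfl]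
        calc 2 * c₀ / M = Real.log (Real.exp (2 * c₀ / M)) := (Real.log_exp _).symm
          _ ≤ Real.log j := Real.log_le_log (Real.exp_pos _) h1
      rw [div_le_iff₀ hM] at h4
      have h5 : Real.log (j:ℝ) * M = M * Real.log (j:ℝ) := mul_comm _ _
      linarith
    have hdenle : 2 + L ≤ M * Real.log j := by
      rw [hL]
      have : Real.log (lam j)⁻¹ / 2 ≤ M / 2 * Real.log j := by linarith
      simp only [hc₀def] at hc₀logj
      linarith
    have hLpos : 0 ≤ L := by
      rw [hLdef]
      apply Real.log_nonneg
      rw [le_inv_comm₀ one_pos hε0]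
      simpa using hε1
    have hnum : Real.log j ≤ Real.log (max 1 (N:ℝ)) := by
      apply Real.log_le_log hjpos
      calc (j:ℝ) ≤ (N:ℝ) := by exact_mod_cast hjN
        _ ≤ max 1 (N:ℝ) := le_max_right _ _
    have hratio' : Real.log (max 1 (N:ℝ)) / (((1:ℕ):ℝ) ^ t + (1 + L) ^ (1:ℝ)) < 1 / (2 * M) :=
      hratio
    rw [Nat.cast_one, Real.one_rpow, Real.rpow_one] at hratio'
    have hden : (1:ℝ) + (1 + L) = 2 + L := by ring
    rw [hden] at hratio'
    have hlb : 1 / M ≤ Real.log (max 1 (N:ℝ)) / (2 + L) := by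
      have h5 : Real.log (j:ℝ) / (M * Real.log (j:ℝ)) ≤ Real.log (max 1 (N:ℝ)) / (2 + L) :=
        div_le_div₀ (le_trans hlogjpos.le hnum) hnum (by linarith) hdenle
      have heq : Real.log (j:ℝ) / (M * Real.log (j:ℝ)) = 1 / M := by
        rw [div_eq_div_iff (show (0:ℝ) < M * Real.log (j:ℝ) by positivity).ne'
          (show (0:ℝ) < M by positivity).ne']
        ring
      rw [← heq]
      exact h5
    have : 1 / M < 1 / (2 * M) := lt_of_le_of_lt hlb hratio'
    have h6 : 1 / (2 * M) < 1 / M := by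
      apply div_lt_div_of_pos_left one_pos (by positivity)
      linarith
    linarith
  · -- λ bounded below : infoN infinite
    push_neg at hinf
    obtain ⟨c, hc0, hcb⟩ := hinf
    have hcb' : ∀ j, 1 ≤ j → c ≤ lam j := hcb
    have hcle1 : c ≤ 1 := le_trans (hcb' 1 le_rfl) (le_of_eq hlam1)
    obtain ⟨T, hTprop⟩ := hwt 1 one_pos
    set x : ℝ := γ 1 * c / 2 with hxdef
    have hxpos : 0 < x := by positivity
    have hxle : x ≤ 1 / 2 := by
      have : γ 1 * c ≤ 1 := mul_le_one₀ hγ1le hc0.le hcle1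
      simp only [hxdef]; linarith
    set ε : ℝ := Real.sqrt x with hεdef
    have hε0 : 0 < ε := Real.sqrt_pos.mpr hxpos
    have hε2 : ε ^ 2 = x := Real.sq_sqrt hxpos.le
    have hε1 : ε ≤ 1 := by
      rw [hεdef, show (1:ℝ) = Real.sqrt 1 by rw [Real.sqrt_one]]
      exact Real.sqrt_le_sqrt (by linarith)
    set d : ℕ := max 1 ⌈T⌉₊ with hddef
    have hd1 : 1 ≤ d := le_max_left _ _
    have hd0 : 0 < d := hd1
    have hTle : T ≤ (d : ℝ) + ε⁻¹ := by
      have h1 : T ≤ (⌈T⌉₊ : ℝ) := Nat.le_ceil T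
      have h2 : ((⌈T⌉₊ : ℕ) : ℝ) ≤ (d : ℝ) := by
        exact_mod_cast le_max_right 1 ⌈T⌉₊
      have h3 : 0 < ε⁻¹ := by positivity
      linarith
    obtain ⟨N, hN, _⟩ := hTprop d hd1 ε hε0 hε1 hTle
    set A : Set (Fin d → ℕ) :=
      {n : Fin d → ℕ | (∀ i, 1 ≤ n i) ∧ ε ^ 2 < ∏ i, lamKJ γ lam (i.1 + 1) (n i)} with hA
    have hAenc : A.encard = (N : ℕ∞) := hN
    set i₀ : Fin d := ⟨0, hd0⟩ with hi₀def
    set f : ℕ → (Fin d → ℕ) := fun a => fun i => if i = i₀ then a + 2 else 1 with hfdef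
    have hfinj : Function.Injective f := by
      intro a b hab
      have := congrFun hab i₀
      simp only [hfdef, if_pos rfl] at this
      omega
    have hmem : ∀ a : ℕ, f a ∈ A := by
      intro a
      constructor
      · intro i
        simp only [hfdef]
        split <;> omega
      · have hprod : ∏ i, lamKJ γ lam (i.1 + 1) (f a i) = lamKJ γ lam (i₀.1 + 1) (a + 2) := by
          rw [Finset.prod_eq_single i₀]
          · simp only [hfdef, if_pos rfl]
          · intro i _ hi
            simp only [hfdef, if_neg hi]
            unfold lamKJ
            rw [if_pos rfl]
          · intro h; exact absurd (Finset.mem_univ i₀) h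
        rw [hprod]
        show ε ^ 2 < lamKJ γ lam (0 + 1) (a + 2)
        unfold lamKJ
        rw [if_neg (by omega)]
        have h1 : c ≤ lam (a + 2) := hcb' (a + 2) (by omega)
        have h2 : γ 1 * c ≤ γ 1 * lam (a + 2) := mul_le_mul_of_nonneg_left h1 hγ1pos.le
        rw [hε2, hxdef]
        linarith
    have hAinf : A.Infinite := Set.infinite_of_injective_forall_mem hfinj hmem
    rw [hAinf.encard_eq] at hAenc
    exact absurd hAenc.symm (by simp)

private lemma pos_inj {b : ℕ} (hb : 0 < b) {i i' r r' : ℕ} (hr : r < b) (hr' : r' < b)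
    (h : i * b + r = i' * b + r') : i = i' ∧ r = r' := by
  have e1 : (i * b + r) / b = i := by
    rw [mul_comm, Nat.mul_add_div hb, Nat.div_eq_of_lt hr, add_zero]
  have e2 : (i' * b + r') / b = i' := by
    rw [mul_comm, Nat.mul_add_div hb, Nat.div_eq_of_lt hr', add_zero]
  have hii : i = i' := by rw [← e1, ← e2, h]
  subst hii
  exact ⟨rfl, by omega⟩

set_option maxHeartbeats 1000000 in
private lemma necGamma (γ lam : ℕ → ℝ)
    (hlam_anti : AntitoneOn lam (Set.Ici 1)) (hlam1 : lam 1 = 1) (hlam2 : 0 < lam 2)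
    (hlam_nonneg : ∀ j, 1 ≤ j → 0 ≤ lam j)
    (hγ_anti : AntitoneOn γ (Set.Ici 1))
    (hγ_pos : ∀ j, 1 ≤ j → 0 < γ j) (hγ_le : ∀ j, 1 ≤ j → γ j ≤ 1)
    (t : ℝ) (ht0 : 0 < t) (ht1 : t < 1) (hwt : ExpSTWT γ lam 1 t) :
    ∀ M : ℝ, 0 < M → ∀ᶠ j : ℕ in atTop, γ j < (j : ℝ) ^ (-M) := by
  classical
  intro M hM
  by_contra hcon
  rw [Filter.not_eventually] at hcon
  have hfreq : ∀ a : ℕ, ∃ dd, a ≤ dd ∧ (dd : ℝ) ^ (-M) ≤ γ dd := by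
    intro a
    obtain ⟨dd, h1, h2⟩ := Filter.frequently_atTop.mp hcon a
    exact ⟨dd, h1, not_lt.mp h2⟩
  have h1t : (0:ℝ) < 1 - t := by linarith
  have hlam2le : lam 2 ≤ 1 := lam_le_one hlam_anti hlam1 (by norm_num)
  set Cl : ℝ := Real.log (lam 2)⁻¹ with hCldef
  have hCl0 : 0 ≤ Cl := by
    rw [hCldef, Real.log_inv]
    linarith [Real.log_nonpos hlam2.le hlam2le]
  set K : ℝ := 3 + (M + Cl) / 2 with hKdef
  have hK : 0 < K := by simp only [hKdef]; linarith
  set δ₀ : ℝ := (1 - t) / (2 * K) with hδ₀def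
  have hδ₀ : 0 < δ₀ := by positivity
  clear_value Cl K δ₀
  obtain ⟨T, hTprop⟩ := hwt δ₀ hδ₀
  set D₀ : ℝ := max (max T 3) (max ((4:ℝ) ^ (1 / (1 - t))) (Real.exp (2 * Real.log 4 / (1 - t))))
    with hD₀def
  obtain ⟨d, hdge, hMd⟩ := hfreq (⌈D₀⌉₊ + 1)
  have hXD : D₀ ≤ (d:ℝ) := by
    have h1 : ((⌈D₀⌉₊ + 1 : ℕ) : ℝ) ≤ (d:ℝ) := by exact_mod_cast hdge
    have h2 := Nat.le_ceil D₀
    push_cast at h1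
    linarith
  have hXT : T ≤ (d:ℝ) := le_trans (le_trans (le_max_left _ _) (le_max_left _ _)) hXD
  have hX3 : (3:ℝ) ≤ (d:ℝ) := le_trans (le_trans (le_max_right _ _) (le_max_left _ _)) hXD
  have hX4 : (4:ℝ) ^ (1 / (1 - t)) ≤ (d:ℝ) :=
    le_trans (le_trans (le_max_left _ _) (le_max_right _ _)) hXD
  have hXe : Real.exp (2 * Real.log 4 / (1 - t)) ≤ (d:ℝ) :=
    le_trans (le_trans (le_max_right _ _) (le_max_right _ _)) hXD
  have hXpos : (0:ℝ) < (d:ℝ) := by linarith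
  have hd1 : 1 ≤ d := by exact_mod_cast show (1:ℝ) ≤ (d:ℝ) by linarith
  have hXt1 : (1:ℝ) ≤ (d:ℝ) ^ t := by
    calc (1:ℝ) = 1 ^ t := (Real.one_rpow t).symm
      _ ≤ (d:ℝ) ^ t := Real.rpow_le_rpow zero_le_one (by linarith) ht0.le
  have hX1t4 : (4:ℝ) ≤ (d:ℝ) ^ (1 - t) := by
    have h1 : ((4:ℝ) ^ (1 / (1 - t))) ^ (1 - t) ≤ (d:ℝ) ^ (1 - t) :=
      Real.rpow_le_rpow (Real.rpow_nonneg (by norm_num) _) hX4 h1t.le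
    rwa [← Real.rpow_mul (by norm_num), one_div, inv_mul_cancel₀ h1t.ne', Real.rpow_one] at h1
  have hXsplit : (d:ℝ) ^ t * (d:ℝ) ^ (1 - t) = (d:ℝ) := by
    rw [← Real.rpow_add hXpos]
    norm_num
  have hlogX1 : 1 ≤ Real.log (d:ℝ) := by
    have : Real.exp 1 < (d:ℝ) := by
      calc Real.exp 1 < 2.7182818286 := Real.exp_one_lt_d9
        _ ≤ (d:ℝ) := by linarith
    linarith [(Real.lt_log_iff_exp_lt hXpos).mpr this]
  have hlogXpos : 0 < Real.log (d:ℝ) := by linarith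
  have hlogX4 : 2 * Real.log 4 ≤ (1 - t) * Real.log (d:ℝ) := by
    have h1 : 2 * Real.log 4 / (1 - t) ≤ Real.log (d:ℝ) := by
      calc 2 * Real.log 4 / (1 - t) = Real.log (Real.exp (2 * Real.log 4 / (1 - t))) :=
            (Real.log_exp _).symm
        _ ≤ Real.log (d:ℝ) := Real.log_le_log (Real.exp_pos _) hXe
    rw [div_le_iff₀ h1t] at h1
    nlinarith [h1]
  -- m and b
  set m : ℕ := ⌈(d:ℝ) ^ t⌉₊ with hmdef
  have hm1 : 1 ≤ m := Nat.one_le_ceil_iff.mpr (by positivity)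
  have hmpos : (0:ℝ) < (m:ℝ) := by exact_mod_cast hm1
  have hXtm : (d:ℝ) ^ t ≤ (m:ℝ) := Nat.le_ceil _
  have hmX : (m:ℝ) ≤ 2 * (d:ℝ) ^ t := by
    have := Nat.ceil_lt_add_one (show (0:ℝ) ≤ (d:ℝ) ^ t by positivity)
    rw [← hmdef] at this
    linarith
  have hmd2 : 2 * (m:ℝ) ≤ (d:ℝ) := by
    have h1 : 4 * (d:ℝ) ^ t ≤ (d:ℝ) ^ (1 - t) * (d:ℝ) ^ t :=
      mul_le_mul_of_nonneg_right hX1t4 (by positivity)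
    rw [mul_comm ((d:ℝ) ^ (1 - t)) _, hXsplit] at h1
    linarith
  have hmd : m ≤ d := by
    exact_mod_cast show (m:ℝ) ≤ (d:ℝ) by linarith
  clear_value m
  set b : ℕ := d / m with hbdef
  have hb1 : 1 ≤ b := (Nat.one_le_div_iff hm1).mpr hmd
  have hbpos : (0:ℝ) < (b:ℝ) := by exact_mod_cast hb1
  have hmbd : b * m ≤ d := Nat.div_mul_le_self d m
  have hbX : (d:ℝ) ^ (1 - t) / 4 ≤ (b:ℝ) := by
    have hlt : d < b * m + m := by
      rw [hbdef]
      exact Nat.lt_div_mul_add hm1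
    have hltR : (d:ℝ) < ((b:ℝ) + 1) * (m:ℝ) := by
      have : ((d:ℕ):ℝ) < ((b * m + m : ℕ) : ℝ) := by exact_mod_cast hlt
      push_cast at this
      linarith
    have h2 : (d:ℝ) / (m:ℝ) < (b:ℝ) + 1 := (div_lt_iff₀ hmpos).mpr hltR
    have h3 : (d:ℝ) / (2 * (d:ℝ) ^ t) ≤ (d:ℝ) / (m:ℝ) :=
      div_le_div_of_nonneg_left hXpos.le hmpos hmX
    have h4 : (d:ℝ) / (2 * (d:ℝ) ^ t) = (d:ℝ) ^ (1 - t) / 2 := by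
      rw [div_eq_div_iff (by positivity : (0:ℝ) < 2 * (d:ℝ) ^ t).ne'
        (by norm_num : (2:ℝ) ≠ 0)]
      linear_combination (-2 : ℝ) * hXsplit
    have h5 : (1:ℝ) ≤ (d:ℝ) ^ (1 - t) / 4 := by linarith
    linarith
  have hlogb : (1 - t) / 2 * Real.log (d:ℝ) ≤ Real.log (b:ℝ) := by
    have h1 : Real.log ((d:ℝ) ^ (1 - t) / 4) ≤ Real.log (b:ℝ) :=
      Real.log_le_log (by positivity) hbX
    rw [Real.log_div (by positivity : ((d:ℝ) ^ (1 - t)) ≠ 0)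
      (by norm_num : (4:ℝ) ≠ 0), Real.log_rpow hXpos] at h1
    linarith
  clear_value b
  -- epsilon
  set q : ℝ := γ d * lam 2 with hqdef
  have hγdpos : 0 < γ d := hγ_pos d hd1
  have hq0 : 0 < q := by rw [hqdef]; positivity
  have hq1 : q ≤ 1 := by
    rw [hqdef]
    exact mul_le_one₀ (hγ_le d hd1) hlam2.le hlam2le
  set x : ℝ := q ^ m / 2 with hxdef
  have hqm0 : 0 < q ^ m := by positivity
  have hqm1 : q ^ m ≤ 1 := pow_le_one₀ hq0.le hq1
  have hxpos : 0 < x := by rw [hxdef]; positivity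
  set ε : ℝ := Real.sqrt x with hεdef
  have hε0 : 0 < ε := Real.sqrt_pos.mpr hxpos
  have hε2 : ε ^ 2 = x := Real.sq_sqrt hxpos.le
  have hε1 : ε ≤ 1 := by
    rw [hεdef, show (1:ℝ) = Real.sqrt 1 by rw [Real.sqrt_one]]
    apply Real.sqrt_le_sqrt
    rw [hxdef]
    linarith
  have hTle : T ≤ (d:ℝ) + ε⁻¹ := by
    have : 0 < ε⁻¹ := by positivity
    linarith
  obtain ⟨N, hN, hratio⟩ := hTprop d hd1 ε hε0 hε1 hTle
  clear_value D₀ q x ε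
  -- injection (Fin m → Fin b) → A
  set A : Set (Fin d → ℕ) :=
    {n : Fin d → ℕ | (∀ i, 1 ≤ n i) ∧ ε ^ 2 < ∏ i, lamKJ γ lam (i.1 + 1) (n i)} with hA
  have hAenc : A.encard = (N : ℕ∞) := hN
  have hAfin : A.Finite := by
    rw [← Set.encard_ne_top_iff, hAenc]
    simp
  have hposlt : ∀ (i : Fin m) (r : Fin b), i.1 * b + r.1 < d := by
    intro i r
    calc i.1 * b + r.1 < i.1 * b + b := by omega
      _ = (i.1 + 1) * b := by ring
      _ ≤ m * b := Nat.mul_le_mul_right b i.isLt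
      _ = b * m := mul_comm _ _
      _ ≤ d := hmbd
  set F : (Fin m → Fin b) → (Fin d → ℕ) :=
    fun x => fun k => if ∃ i : Fin m, k.1 = i.1 * b + (x i).1 then 2 else 1 with hFdef
  have hF2 : ∀ x k, F x k = 2 ↔ ∃ i : Fin m, k.1 = i.1 * b + (x i).1 := by
    intro x k
    simp only [hFdef]
    split
    · rename_i h
      exact iff_of_true rfl h
    · rename_i h
      exact iff_of_false (by norm_num) h
  have hF1 : ∀ x k, F x k = 2 ∨ F x k = 1 := by
    intro x k
    simp only [hFdef]
    split
    · exact Or.inl rfl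
    · exact Or.inr rfl
  have hFinj : Function.Injective F := by
    intro x y hxy
    funext i
    set p : Fin d := ⟨i.1 * b + (x i).1, hposlt i (x i)⟩ with hpdef
    have hx2 : F x p = 2 := (hF2 x p).mpr ⟨i, rfl⟩
    have hy2 : F y p = 2 := by rw [← hxy]; exact hx2
    obtain ⟨i', hi'⟩ := (hF2 y p).mp hy2
    have : i.1 * b + (x i).1 = i'.1 * b + (y i').1 := hi'
    obtain ⟨hii, hrr⟩ := pos_inj (show 0 < b from hb1) (x i).isLt (y i').isLt this
    have hie : i = i' := Fin.ext hii
    subst hie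
    exact Fin.ext hrr
  have hmemF : ∀ x : Fin m → Fin b, F x ∈ A := by
    intro x
    constructor
    · intro k
      rcases hF1 x k with h | h <;> rw [h]
      · norm_num
    · have hScard : (Finset.univ.filter (fun k : Fin d => F x k = 2)).card = m := by
        have hiinj : Function.Injective
            (fun i : Fin m => (⟨i.1 * b + (x i).1, hposlt i (x i)⟩ : Fin d)) := by
          intro i i' h
          have hval : i.1 * b + (x i).1 = i'.1 * b + (x i').1 := congrArg Fin.val h
          obtain ⟨hii, -⟩ := pos_inj (show 0 < b from hb1) (x i).isLt (x i').isLt hval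
          exact Fin.ext hii
        have hSeq : Finset.univ.filter (fun k : Fin d => F x k = 2)
            = Finset.image (fun i : Fin m => (⟨i.1 * b + (x i).1, hposlt i (x i)⟩ : Fin d))
              Finset.univ := by
          ext k
          rw [Finset.mem_filter, Finset.mem_image, hF2]
          constructor
          · rintro ⟨-, i, hi⟩
            exact ⟨i, Finset.mem_univ i, Fin.ext hi.symm⟩
          · rintro ⟨i, -, hi⟩
            exact ⟨Finset.mem_univ k, i, (congrArg Fin.val hi).symm⟩
        rw [hSeq, Finset.card_image_of_injective _ hiinj, Finset.card_univ, Fintype.card_fin]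
      have hgle : ∀ k : Fin d, (if F x k = 2 then q else 1) ≤ lamKJ γ lam (k.1 + 1) (F x k) := by
        intro k
        rcases hF1 x k with h | h <;> rw [h]
        · rw [if_pos rfl]
          show q ≤ lamKJ γ lam (k.1 + 1) 2
          unfold lamKJ
          rw [if_neg (by norm_num)]
          rw [hqdef]
          apply mul_le_mul_of_nonneg_right _ hlam2.le
          exact hγ_anti (Set.mem_Ici.mpr (Nat.le_add_left 1 k.1)) (Set.mem_Ici.mpr hd1)
            (by omega)
        · rw [if_neg (by norm_num)]
          show (1:ℝ) ≤ lamKJ γ lam (k.1 + 1) 1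
          unfold lamKJ
          rw [if_pos rfl]
      have hgnn : ∀ k : Fin d, (0:ℝ) ≤ (if F x k = 2 then q else 1) := by
        intro k
        split
        · exact hq0.le
        · exact zero_le_one
      have hprod1 : ∏ k : Fin d, (if F x k = 2 then q else 1) = q ^ m := by
        rw [Finset.prod_ite, Finset.prod_const, Finset.prod_const_one, mul_one, hScard]
      have hprod2 : q ^ m ≤ ∏ k : Fin d, lamKJ γ lam (k.1 + 1) (F x k) := by
        rw [← hprod1]
        exact Finset.prod_le_prod (fun k _ => hgnn k) (fun k _ => hgle k)
      rw [hε2, hxdef]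
      linarith
  have hsubA : Set.range F ⊆ A := Set.range_subset_iff.mpr hmemF
  have hNlb : b ^ m ≤ N := by
    have h1 : (Set.range F).ncard = b ^ m := by
      have h2 : (Set.range F).ncard = Nat.card (Fin m → Fin b) := by
        rw [← Nat.card_coe_set_eq]
        exact Nat.card_range_of_injective hFinj
      rw [h2, Nat.card_eq_fintype_card, Fintype.card_fun, Fintype.card_fin, Fintype.card_fin]
    have h2 : A.ncard = N := by
      rw [Set.ncard_def, hAenc]
      rfl
    have h3 := Set.ncard_le_ncard hsubA hAfin
    omega
  clear_value A F
  clear hF2 hF1 hFinj hmemF hsubA hAenc hAfin hFdef hA F A hposlt hN hTprop hfreq hcon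
  -- ratio bounds
  set L : ℝ := Real.log ε⁻¹ with hLdef
  rw [Real.rpow_one] at hratio
  have hL : L = (Real.log 2 + (m:ℝ) * Real.log q⁻¹) / 2 := by
    rw [hLdef, Real.log_inv, hεdef, Real.log_sqrt hxpos.le, hxdef,
      Real.log_div (by positivity) (by norm_num), Real.log_pow, Real.log_inv]
    ring
  have hlogq : Real.log q⁻¹ ≤ M * Real.log (d:ℝ) + Cl := by
    rw [hqdef, mul_inv, Real.log_mul (by positivity) (by positivity), ← hCldef]
    have h3 : (γ d)⁻¹ ≤ (d:ℝ) ^ M := by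
      have h2 : (d:ℝ) ^ (-M) = ((d:ℝ) ^ M)⁻¹ := Real.rpow_neg hXpos.le M
      rw [h2] at hMd
      rw [show ((d:ℝ) ^ M) = (((d:ℝ) ^ M)⁻¹)⁻¹ by rw [inv_inv]]
      exact inv_anti₀ (by positivity) hMd
    have h4 : Real.log (γ d)⁻¹ ≤ M * Real.log (d:ℝ) := by
      calc Real.log (γ d)⁻¹ ≤ Real.log ((d:ℝ) ^ M) := Real.log_le_log (by positivity) h3
        _ = M * Real.log (d:ℝ) := Real.log_rpow hXpos M
    linarith
  have hlogq0 : 0 ≤ Real.log q⁻¹ := by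
    rw [Real.log_inv]
    linarith [Real.log_nonpos hq0.le hq1]
  have hL0 : 0 ≤ L := by
    rw [hLdef]
    apply Real.log_nonneg
    rw [le_inv_comm₀ one_pos hε0]
    simpa using hε1
  have hden_le : (d:ℝ) ^ t + (1 + L) ≤ K * ((m:ℝ) * Real.log (d:ℝ)) := by
    have e1 : (d:ℝ) ^ t ≤ (m:ℝ) * Real.log (d:ℝ) := by
      calc (d:ℝ) ^ t ≤ (m:ℝ) := hXtm
        _ = (m:ℝ) * 1 := (mul_one _).symm
        _ ≤ (m:ℝ) * Real.log (d:ℝ) := mul_le_mul_of_nonneg_left hlogX1 hmpos.le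
    have e2 : (1:ℝ) ≤ (m:ℝ) * Real.log (d:ℝ) := by
      have h9 : (1:ℝ) * 1 ≤ (m:ℝ) * Real.log (d:ℝ) :=
        mul_le_mul (by exact_mod_cast hm1) hlogX1 zero_le_one hmpos.le
      linarith
    have e3 : Real.log 2 / 2 ≤ 1 := by
      have h5 := Real.log_le_sub_one_of_pos (show (0:ℝ) < 2 by norm_num)
      linarith
    have e4 : (m:ℝ) * Real.log q⁻¹ ≤ (m:ℝ) * Real.log (d:ℝ) * (M + Cl) := by
      have h5 : Real.log q⁻¹ ≤ (M + Cl) * Real.log (d:ℝ) := by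
        have h6 : Cl * 1 ≤ Cl * Real.log (d:ℝ) := mul_le_mul_of_nonneg_left hlogX1 hCl0
        linarith [hlogq, h6]
      calc (m:ℝ) * Real.log q⁻¹ ≤ (m:ℝ) * ((M + Cl) * Real.log (d:ℝ)) :=
            mul_le_mul_of_nonneg_left h5 hmpos.le
        _ = (m:ℝ) * Real.log (d:ℝ) * (M + Cl) := by ring
    rw [hL, hKdef]
    linarith [e1, e2, e3, e4]
  have hnum : (m:ℝ) * ((1 - t) / 2 * Real.log (d:ℝ)) ≤ Real.log (max 1 (N:ℝ)) := by
    have hbm1 : (1:ℝ) ≤ ((b ^ m : ℕ) : ℝ) := by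
      have : 1 ≤ b ^ m := Nat.one_le_pow m b hb1
      exact_mod_cast this
    have h6 : ((b ^ m : ℕ) : ℝ) ≤ max 1 (N:ℝ) := by
      have h7 : ((b ^ m : ℕ) : ℝ) ≤ (N:ℝ) := by exact_mod_cast hNlb
      exact h7.trans (le_max_right _ _)
    have h7 : Real.log ((b ^ m : ℕ) : ℝ) ≤ Real.log (max 1 (N:ℝ)) :=
      Real.log_le_log (by linarith) h6
    rw [show ((b ^ m : ℕ) : ℝ) = ((b:ℝ)) ^ m by push_cast; ring, Real.log_pow] at h7
    calc (m:ℝ) * ((1 - t) / 2 * Real.log (d:ℝ)) ≤ (m:ℝ) * Real.log (b:ℝ) :=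
          mul_le_mul_of_nonneg_left hlogb hmpos.le
      _ ≤ _ := h7
  have hdenpos : (0:ℝ) < (d:ℝ) ^ t + (1 + L) := by linarith
  have hml : (0:ℝ) < (m:ℝ) * Real.log (d:ℝ) := mul_pos hmpos hlogXpos
  have hnum0 : (0:ℝ) ≤ (m:ℝ) * ((1 - t) / 2 * Real.log (d:ℝ)) :=
    mul_nonneg hmpos.le (mul_nonneg (by linarith) hlogXpos.le)
  have h8 : (m:ℝ) * ((1 - t) / 2 * Real.log (d:ℝ)) / (K * ((m:ℝ) * Real.log (d:ℝ)))
      ≤ Real.log (max 1 (N:ℝ)) / ((d:ℝ) ^ t + (1 + L)) :=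
    div_le_div₀ (le_trans hnum0 hnum) hnum hdenpos hden_le
  have heq : (m:ℝ) * ((1 - t) / 2 * Real.log (d:ℝ)) / (K * ((m:ℝ) * Real.log (d:ℝ)))
      = (1 - t) / (2 * K) := by
    rw [div_eq_div_iff (mul_pos hK hml).ne' (show (0:ℝ) < 2 * K by linarith).ne']
    ring
  rw [heq] at h8
  rw [← hδ₀def] at h8
  linarith

/-- for 0 < t < 1, EXP-(1,t)-WT holds iff for every M > 0 one eventually has
γ_j < j^(-M) and for every M > 0 one eventually has λ_j < j^(-M). -/
theorem stmt4 (γ lam : ℕ → ℝ)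
    (hlam_anti : AntitoneOn lam (Set.Ici 1)) (hlam1 : lam 1 = 1) (hlam2 : 0 < lam 2)
    (hlam_nonneg : ∀ j, 1 ≤ j → 0 ≤ lam j)
    (hγ_anti : AntitoneOn γ (Set.Ici 1))
    (hγ_pos : ∀ j, 1 ≤ j → 0 < γ j) (hγ_le : ∀ j, 1 ≤ j → γ j ≤ 1)
    (t : ℝ) (ht0 : 0 < t) (ht1 : t < 1) :
    ExpSTWT γ lam 1 t ↔
      ((∀ M : ℝ, 0 < M → ∀ᶠ j : ℕ in atTop, γ j < (j : ℝ) ^ (-M)) ∧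
        (∀ M : ℝ, 0 < M → ∀ᶠ j : ℕ in atTop, lam j < (j : ℝ) ^ (-M))) := by
  constructor
  · intro hwt
    exact ⟨necGamma γ lam hlam_anti hlam1 hlam2 hlam_nonneg hγ_anti hγ_pos hγ_le t ht0 ht1 hwt,
      necLam γ lam hlam_anti hlam1 hlam_nonneg hγ_pos hγ_le t hwt⟩
  · rintro ⟨hγd, hld⟩
    exact suffDir γ lam hlam_anti hlam1 hlam_nonneg hγ_anti hγ_pos hγ_le t ht0 hγd hld
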